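/- Let X be a finite T₀ topological space. Then for every nonempty open set U in X there exists a point t ∈ U such that U \ {t} is open in X (i.e., the family of open sets of X is an antimatroid). -/

import Mathlib

/-- in a finite T₀ topological space, every nonempty open set `U` has a
point `t` with `U \ {t}` open (the lattice of open sets is an antimatroid). -/
theorem stmt_16 {X : Type*} [TopologicalSpace X] [Finite X] [T0Space X]
    (U : Set X) (hU : IsOpen U) (hne : U.Nonempty) :
    ∃ t ∈ U, IsOpen (U \ {t}) := by
  obtain ⟨t, htU, hmin⟩ : ∃ t ∈ U, ∀ x ∈ U, closure ({x} : Set X) ⊆ closure ({t} : Set X) →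
      closure ({t} : Set X) = closure ({x} : Set X) := by
    obtain ⟨t, htU, hm⟩ := Set.Finite.exists_minimalFor
      (fun x : X => closure ({x} : Set X)) U (Set.toFinite U) hne
    exact ⟨t, htU, fun x hx hs => Set.Subset.antisymm (hm hx hs) hs⟩
  refine ⟨t, htU, ?_⟩
  have key : U \ {t} = U \ closure ({t} : Set X) := by
    ext x
    simp only [Set.mem_diff, Set.mem_singleton_iff]
    constructor
    · rintro ⟨hxU, hxt⟩
      refine ⟨hxU, fun hx => hxt ?_⟩
      have hspec : t ⤳ x := specializes_iff_mem_closure.2 hx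
      have hsub : closure ({x} : Set X) ⊆ closure ({t} : Set X) :=
        (specializes_iff_closure_subset.1 hspec)
      have := hmin x hxU hsub
      exact (inseparable_iff_closure_eq.2 this).eq.symm
    · rintro ⟨hxU, hx⟩
      exact ⟨hxU, fun h => hx (h ▸ subset_closure rfl)⟩
  rw [key, Set.diff_eq]
  exact hU.inter isClosed_closure.isOpen_compl
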